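/- Let k be a field and let f : Fin m → Polynomial k with natDegree (f i) ≤ m + p − 1 for every i. Then the Wronskian satisfies natDegree (Wr f) ≤ m * p. -/

import Mathlib

open Polynomial

/-- The Wronskian of a family `f : Fin m → Polynomial k`. -/
noncomputable def Wr {k : Type*} [Field k] {m : ℕ} (f : Fin m → Polynomial k) : Polynomial k :=
  Matrix.det (Matrix.of fun i j : Fin m => Polynomial.derivative^[(i : ℕ)] (f j))

section Aux

open Polynomial Finset

variable {k : Type*} [Field k] {m p : ℕ}

noncomputable def derivRow (k : Type*) [Field k] (m : ℕ) :
    Polynomial k →ₗ[k] (Fin m → Polynomial k) :=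
  LinearMap.pi (fun i : Fin m => (Polynomial.derivative (R := k)) ^ (i : ℕ))

lemma derivRow_apply (g : Polynomial k) (i : Fin m) :
    derivRow k m g i = Polynomial.derivative^[(i : ℕ)] g := by
  simp [derivRow, Module.End.pow_apply]

noncomputable def WrM (k : Type*) [Field k] (m : ℕ) :
    MultilinearMap k (fun _ : Fin m => Polynomial k) (Polynomial k) :=
  (((Matrix.detRowAlternating :
      AlternatingMap (Polynomial k) (Fin m → Polynomial k) (Polynomial k) (Fin m))).toMultilinearMap.restrictScalars
    k).compLinearMap (fun _ => derivRow k m)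

lemma WrM_apply (f : Fin m → Polynomial k) :
    WrM k m f = Matrix.det (Matrix.of fun j i : Fin m => Polynomial.derivative^[(i : ℕ)] (f j)) := by
  have h : (fun j => derivRow k m (f j)) =
      Matrix.of (fun j i : Fin m => Polynomial.derivative^[(i : ℕ)] (f j)) := by
    funext j i; exact derivRow_apply (f j) i
  simp only [WrM, MultilinearMap.compLinearMap_apply, MultilinearMap.coe_restrictScalars]
  rw [h]
  rfl

lemma strictMono_coe_le {m : ℕ} {f : Fin m → ℕ} (hf : StrictMono f) : ∀ j : Fin m, (j : ℕ) ≤ f j := by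
  intro j
  induction' hn : (j : ℕ) with a ih generalizing j
  · omega
  · have hj := j.isLt
    have ha : a < m := by omega
    have h1 : (⟨a, ha⟩ : Fin m) < j := by simp [Fin.lt_def, hn]
    have h2 := hf h1
    have h3 := ih ⟨a, ha⟩ rfl
    omega

lemma sum_le_of_injective {m p : ℕ} (d : Fin m → ℕ) (hinj : Function.Injective d)
    (hd : ∀ j, d j < m + p) : ∑ j, d j ≤ m * p + ∑ j : Fin m, (j : ℕ) := by
  rcases Nat.eq_zero_or_pos m with hm | hm
  · subst hm; simp
  classical
  set s : Finset ℕ := Finset.image d Finset.univ with hs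
  have hcard : s.card = m := by
    rw [hs, Finset.card_image_of_injective _ hinj, Finset.card_univ, Fintype.card_fin]
  set e : Fin m → ℕ := fun j => ((s.orderIsoOfFin hcard j : ℕ)) with he
  have hemem : ∀ j, e j ∈ s := fun j => (s.orderIsoOfFin hcard j).2
  have heb : ∀ j, e j < m + p := by
    intro j
    obtain ⟨i, _, hi⟩ := Finset.mem_image.mp (hemem j)
    rw [← hi]; exact hd i
  have hmono : StrictMono e := by
    intro a b hab
    exact_mod_cast (s.orderIsoOfFin hcard).strictMono hab
  have hub : ∀ j : Fin m, e j ≤ p + j := by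
    intro j
    set g : Fin m → ℕ := fun a => (m + p - 1) - e a.rev with hg
    have hgmono : StrictMono g := by
      intro a b hab
      have h1 : b.rev < a.rev := Fin.rev_lt_rev.mpr hab
      have h2 := hmono h1
      have h3 := heb a.rev
      simp only [hg]
      omega
    have h4 := strictMono_coe_le hgmono j.rev
    have h5 := heb j
    have h6 : (j.rev : ℕ) = m - 1 - j := by
      have := j.isLt
      simp [Fin.rev]
      omega
    rw [h6] at h4
    simp only [hg, Fin.rev_rev] at h4
    have hj := j.isLt
    omega
  have hsum : ∑ j, d j = ∑ j, e j := by
    have himg : ∑ x ∈ s, (fun x => x) x = ∑ j : Fin m, (fun x => x) (d j) :=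
      Finset.sum_image (fun a _ b _ h => hinj h)
    simp only at himg
    rw [← himg]
    rw [← Finset.sum_coe_sort s (fun x => (x : ℕ))]
    exact (Equiv.sum_comp (s.orderIsoOfFin hcard).toEquiv (fun x : s => (x : ℕ))).symm
  rw [hsum]
  calc ∑ j, e j ≤ ∑ j : Fin m, (p + (j : ℕ)) := Finset.sum_le_sum (fun j _ => hub j)
    _ = m * p + ∑ j : Fin m, (j : ℕ) := by
        rw [Finset.sum_add_distrib, Finset.sum_const, Finset.card_univ, Fintype.card_fin,
          smul_eq_mul]

lemma natDegree_WrM_monomial {k : Type*} [Field k] {m p : ℕ} (d : Fin m → ℕ)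
    (hd : ∀ j, d j < m + p) :
    (WrM k m (fun j => (X : Polynomial k) ^ (d j))).natDegree ≤ m * p := by
  by_cases hinj : Function.Injective d
  · rw [WrM_apply, Matrix.det_apply]
    refine Polynomial.natDegree_sum_le_of_forall_le _ _ ?_
    intro σ _
    rw [Units.smul_def, zsmul_eq_mul]
    refine le_trans Polynomial.natDegree_mul_le (le_trans (Nat.add_le_add_right
      (le_of_eq (Polynomial.natDegree_intCast _)) _) ?_)
    rw [zero_add]
    by_cases hz : ∀ i : Fin m, (i : ℕ) ≤ d (σ i)
    · refine le_trans (Polynomial.natDegree_prod_le _ _) ?_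
      have hterm : ∀ i : Fin m,
          ((Matrix.of fun j i : Fin m =>
            Polynomial.derivative^[(i : ℕ)] ((X : Polynomial k) ^ d j)) (σ i) i).natDegree
            ≤ d (σ i) - (i : ℕ) := by
        intro i
        refine le_trans (Polynomial.natDegree_iterate_derivative _ _) ?_
        simp
      refine le_trans (Finset.sum_le_sum (fun i _ => hterm i)) ?_
      have h1 : ∑ i : Fin m, (d (σ i) - (i : ℕ)) + ∑ i : Fin m, (i : ℕ)
          = ∑ i : Fin m, d (σ i) := by
        rw [← Finset.sum_add_distrib]
        exact Finset.sum_congr rfl (fun i _ => by have := hz i; omega)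
      have h2 : ∑ i : Fin m, d (σ i) = ∑ i, d i := Equiv.sum_comp σ d
      have h3 := sum_le_of_injective d hinj hd
      omega
    · push_neg at hz
      obtain ⟨i, hi⟩ := hz
      have hzero : (∏ i : Fin m,
          (Matrix.of fun j i : Fin m =>
            Polynomial.derivative^[(i : ℕ)] ((X : Polynomial k) ^ d j)) (σ i) i) = 0 := by
        refine Finset.prod_eq_zero (Finset.mem_univ i) ?_
        simp only [Matrix.of_apply]
        exact Polynomial.iterate_derivative_eq_zero (by simpa using hi)
      rw [hzero]
      simp
  · obtain ⟨a, b, hab, hne⟩ : ∃ a b, d a = d b ∧ a ≠ b := by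
      unfold Function.Injective at hinj
      push_neg at hinj
      tauto
    have hz : (Matrix.of fun j i : Fin m =>
        Polynomial.derivative^[(i : ℕ)] ((X : Polynomial k) ^ d j)).det = 0 := by
      refine Matrix.det_zero_of_row_eq hne ?_
      funext i
      simp [hab]
    rw [WrM_apply, hz]
    simp

set_option maxHeartbeats 1000000 in
theorem natDegree_wronskian_le' {k : Type*} [Field k] {m p : ℕ}
    (f : Fin m → Polynomial k) (hf : ∀ i, (f i).natDegree ≤ m + p - 1) :
    (Matrix.det (Matrix.of fun i j : Fin m => Polynomial.derivative^[(i : ℕ)] (f j))).natDegree ≤ m * p := by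
  rcases Nat.eq_zero_or_pos m with hm | hm
  · subst hm
    simp [Matrix.det_fin_zero]
  · have hW : (Matrix.det (Matrix.of fun i j : Fin m => Polynomial.derivative^[(i : ℕ)] (f j)))
        = WrM k m f := by
      rw [WrM_apply, ← Matrix.det_transpose]
      rfl
    rw [hW]
    have hrepr : f = fun j => ∑ e ∈ Finset.range (m + p),
        (f j).coeff e • (X : Polynomial k) ^ e := by
      funext j
      conv_lhs => rw [Polynomial.as_sum_range' (f j) (m + p) (by have := hf j; omega)]
      exact Finset.sum_congr rfl (fun e _ => (Polynomial.smul_X_eq_monomial).symm)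
    rw [hrepr, (WrM k m).map_sum_finset (fun j e => (f j).coeff e • (X : Polynomial k) ^ e)
      (fun _ => Finset.range (m + p))]
    refine Polynomial.natDegree_sum_le_of_forall_le _ _ ?_
    intro r hr
    rw [MultilinearMap.map_smul_univ]
    refine le_trans (Polynomial.natDegree_smul_le _ _) ?_
    refine natDegree_WrM_monomial (fun j => r j) ?_
    intro j
    have := Fintype.mem_piFinset.mp hr j
    simpa using this

end Aux

theorem natDegree_wronskian_le {k : Type*} [Field k] {m p : ℕ}
    (f : Fin m → Polynomial k) (hf : ∀ i, (f i).natDegree ≤ m + p - 1) :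
    (Wr f).natDegree ≤ m * p := by
  unfold Wr
  exact natDegree_wronskian_le' f hf
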